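/- Let σ_z, σ₊, σ₋ be the 2×2 complex matrices σ_z = [[1,0],[0,−1]], σ₊ = [[0,1],[0,0]], σ₋ = [[0,0],[1,0]], and let α, n̄, λ be real numbers. Define the dissipator D[X] := α·n̄·(2·σ₊·X·σ₋ − (σ₋·σ₊·X + X·σ₋·σ₊)) + α·(n̄+1)·(2·σ₋·X·σ₊ − (σ₊·σ₋·X + X·σ₊·σ₋)) for a 2×2 complex matrix X. Then D[exp(λ·σ_z)] = α·( [ n̄·(e^(−2λ) − 1) + (n̄+1)·(e^(2λ) − 1) ]·I₂ + [ n̄·(e^(−2λ) + 1) − (n̄+1)·(e^(2λ) + 1) ]·σ_z ) · exp(λ·σ_z), where exp denotes the matrix exponential and I₂ the 2×2 identity matrix. -/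

import Mathlib

/-- The Pauli z matrix. -/
noncomputable def sigmaZ : Matrix (Fin 2) (Fin 2) ℂ := !![1, 0; 0, -1]

/-- The raising operator σ₊. -/
noncomputable def sigmaPlus : Matrix (Fin 2) (Fin 2) ℂ := !![0, 1; 0, 0]

/-- The lowering operator σ₋. -/
noncomputable def sigmaMinus : Matrix (Fin 2) (Fin 2) ℂ := !![0, 0; 1, 0]

/-- The two-level dissipator
`D[X] = α n̄ (2σ₊Xσ₋ − {σ₋σ₊, X}) + α(n̄+1)(2σ₋Xσ₊ − {σ₊σ₋, X})`. -/
noncomputable def dissipator (α nbar : ℝ) (X : Matrix (Fin 2) (Fin 2) ℂ) :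
    Matrix (Fin 2) (Fin 2) ℂ :=
  ((α : ℂ) * nbar) •
      ((2 : ℂ) • (sigmaPlus * X * sigmaMinus)
        - (sigmaMinus * sigmaPlus * X + X * sigmaMinus * sigmaPlus))
    + ((α : ℂ) * (nbar + 1)) •
      ((2 : ℂ) • (sigmaMinus * X * sigmaPlus)
        - (sigmaPlus * sigmaMinus * X + X * sigmaPlus * sigmaMinus))

lemma exp_l_sigmaZ (l : ℝ) :
    NormedSpace.exp (l • sigmaZ) = !![Complex.exp l, 0; 0, Complex.exp (-l)] := by
  have h : l • sigmaZ = Matrix.diagonal ![(l : ℂ), -l] := by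
    ext i j; fin_cases i <;> fin_cases j <;>
      simp [sigmaZ, Matrix.diagonal]
  rw [h, Matrix.exp_diagonal]
  ext i j; fin_cases i <;> fin_cases j <;>
    simp [Matrix.diagonal, ← Complex.exp_eq_exp_ℂ]

/-- Action of the dissipator on `exp(λσ_z)`:
`D[exp(λσ_z)] = α([n̄(e^(−2λ)−1) + (n̄+1)(e^(2λ)−1)] I₂
  + [n̄(e^(−2λ)+1) − (n̄+1)(e^(2λ)+1)] σ_z) exp(λσ_z)`. -/
theorem dissipator_exp_sigmaZ (α nbar l : ℝ) :
    dissipator α nbar (NormedSpace.exp (l • sigmaZ))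
      = (α : ℂ) •
          (((nbar : ℂ) * (Real.exp (-(2 * l)) - 1)
              + ((nbar : ℂ) + 1) * (Real.exp (2 * l) - 1)) • (1 : Matrix (Fin 2) (Fin 2) ℂ)
            + ((nbar : ℂ) * (Real.exp (-(2 * l)) + 1)
              - ((nbar : ℂ) + 1) * (Real.exp (2 * l) + 1)) • sigmaZ)
          * NormedSpace.exp (l • sigmaZ) := by
  rw [exp_l_sigmaZ]
  have h2 : ((Real.exp (2*l) : ℝ) : ℂ) = Complex.exp l * Complex.exp l := by
    rw [Complex.ofReal_exp, ← Complex.exp_add]; norm_num; ring_nf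
  have h2' : ((Real.exp (-(2*l)) : ℝ) : ℂ) = Complex.exp (-l) * Complex.exp (-l) := by
    rw [Complex.ofReal_exp, ← Complex.exp_add]; push_cast; ring_nf
  ext i j
  fin_cases i <;> fin_cases j <;>
    simp [dissipator, sigmaZ, sigmaPlus, sigmaMinus, Matrix.mul_apply,
      Fin.sum_univ_two, h2, h2', Complex.exp_neg] <;>
    field_simp [Complex.exp_ne_zero] <;> ring
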